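/- Let {θ_n} be iterates of projected Imitation Gradient θ_{n+1} = P_Θ(θ_n - η∇f_n(θ_n)), where f_n = f_{θ_n} and each f_n is α-strongly convex and γ-smooth with interior minimizer θ_n* (so ∇f_n(θ_n*) = 0). Under the β-Lipschitz distribution-continuity assumption, the path variation satisfies V(θ*_{1:N}) := Σ_{n=1}^{N-1} ‖θ_n* - θ_{n+1}*‖ ≤ η(βγ/α) Σ_{n=1}^N ‖θ_n - θ_n*‖. -/

import Mathlib

open Finset

/-- Lemma (path variation bound for Imitation Gradient): the path variation of
the optimal parameters is bounded by η(βγ/α) times the cumulative distance of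
the iterates to their instantaneous optima. -/
theorem path_variation_bound {dm : ℕ}
    (Θ : Set (EuclideanSpace ℝ (Fin dm)))
    (hconv : Convex ℝ Θ) (hcomp : IsCompact Θ)
    (f : EuclideanSpace ℝ (Fin dm) → EuclideanSpace ℝ (Fin dm) → ℝ)
    (g : EuclideanSpace ℝ (Fin dm) → EuclideanSpace ℝ (Fin dm) → EuclideanSpace ℝ (Fin dm))
    (α β γ : ℝ) (hα : 0 < α) (hβ : 0 ≤ β) (hγ : 0 < γ)
    (hsc : ∀ p ∈ Θ, ∀ x ∈ Θ, ∀ y ∈ Θ,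
      f p y ≥ f p x + (inner ℝ (g p x) (y - x) : ℝ) + (α / 2) * ‖x - y‖ ^ 2)
    (hsm : ∀ p ∈ Θ, ∀ x y, ‖g p x - g p y‖ ≤ γ * ‖x - y‖)
    (hlip : ∀ p₁ ∈ Θ, ∀ p₂ ∈ Θ, ∀ x ∈ Θ, ‖g p₁ x - g p₂ x‖ ≤ β * ‖p₁ - p₂‖)
    (P : EuclideanSpace ℝ (Fin dm) → EuclideanSpace ℝ (Fin dm))
    (hPmem : ∀ x, P x ∈ Θ)
    (hPfix : ∀ y ∈ Θ, P y = y)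
    (hPlip : ∀ x y, ‖P x - P y‖ ≤ ‖x - y‖)
    (η : ℝ) (hη : 0 < η)
    (θ θs : ℕ → EuclideanSpace ℝ (Fin dm))
    (hθmem : ∀ n, θ n ∈ Θ) (hθsmem : ∀ n, θs n ∈ Θ)
    (hupdate : ∀ n, θ (n + 1) = P (θ n - η • g (θ n) (θ n)))
    (hmin : ∀ n, IsMinOn (f (θ n)) Θ (θs n))
    (hinterior : ∀ n, g (θ n) (θs n) = 0)
    (N : ℕ) :
    ∑ n ∈ Finset.range (N - 1), ‖θs n - θs (n + 1)‖ ≤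
      η * (β * γ / α) * ∑ n ∈ Finset.range N, ‖θ n - θs n‖ := by
  have hc : 0 ≤ η * (β * γ / α) := by positivity
  -- strong monotonicity of the gradient
  have hmono : ∀ p ∈ Θ, ∀ x ∈ Θ, ∀ y ∈ Θ,
      α * ‖x - y‖ ^ 2 ≤ (inner ℝ (g p y - g p x) (y - x) : ℝ) := by
    intro p hp x hx y hy
    have h1 := hsc p hp x hx y hy
    have h2 := hsc p hp y hy x hx
    have hnorm : ‖y - x‖ = ‖x - y‖ := norm_sub_rev _ _
    rw [inner_sub_left]
    have hx2 : (inner ℝ (g p y) (x - y) : ℝ) = - inner ℝ (g p y) (y - x) := by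
      rw [← inner_neg_right]; congr 1; abel
    rw [hnorm] at h2
    linarith [h1, h2, hx2]
  -- per-step iterate movement
  have hstep : ∀ n, ‖θ (n + 1) - θ n‖ ≤ η * γ * ‖θ n - θs n‖ := by
    intro n
    have h1 : ‖θ (n + 1) - θ n‖ ≤ ‖(θ n - η • g (θ n) (θ n)) - θ n‖ := by
      rw [hupdate n]
      calc ‖P (θ n - η • g (θ n) (θ n)) - θ n‖
          = ‖P (θ n - η • g (θ n) (θ n)) - P (θ n)‖ := by rw [hPfix (θ n) (hθmem n)]
        _ ≤ ‖(θ n - η • g (θ n) (θ n)) - θ n‖ := hPlip _ _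
    have h2 : ‖(θ n - η • g (θ n) (θ n)) - θ n‖ = η * ‖g (θ n) (θ n)‖ := by
      have : (θ n - η • g (θ n) (θ n)) - θ n = -(η • g (θ n) (θ n)) := by abel
      rw [this, norm_neg, norm_smul, Real.norm_eq_abs, abs_of_pos hη]
    have h3 : ‖g (θ n) (θ n)‖ ≤ γ * ‖θ n - θs n‖ := by
      have := hsm (θ n) (hθmem n) (θ n) (θs n)
      rwa [hinterior n, sub_zero] at this
    calc ‖θ (n + 1) - θ n‖ ≤ η * ‖g (θ n) (θ n)‖ := by rw [← h2]; exact h1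
      _ ≤ η * (γ * ‖θ n - θs n‖) := by
          exact mul_le_mul_of_nonneg_left h3 hη.le
      _ = η * γ * ‖θ n - θs n‖ := by ring
  -- contraction of optima
  have hterm : ∀ n, ‖θs n - θs (n + 1)‖ ≤ η * (β * γ / α) * ‖θ n - θs n‖ := by
    intro n
    have hm := hmono (θ n) (hθmem n) (θs n) (hθsmem n) (θs (n + 1)) (hθsmem (n + 1))
    rw [hinterior n, sub_zero] at hm
    -- replace g (θ n) (θs (n+1)) by the difference with g (θ (n+1)) (θs (n+1)) = 0
    have hzero : g (θ (n + 1)) (θs (n + 1)) = 0 := hinterior (n + 1)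
    have hcs : (inner ℝ (g (θ n) (θs (n + 1))) (θs (n + 1) - θs n) : ℝ)
        ≤ β * ‖θ n - θ (n + 1)‖ * ‖θs n - θs (n + 1)‖ := by
      have h1 : (inner ℝ (g (θ n) (θs (n + 1))) (θs (n + 1) - θs n) : ℝ)
          ≤ ‖g (θ n) (θs (n + 1))‖ * ‖θs (n + 1) - θs n‖ :=
        real_inner_le_norm _ _
      have h2 : ‖g (θ n) (θs (n + 1))‖ ≤ β * ‖θ n - θ (n + 1)‖ := by
        have := hlip (θ n) (hθmem n) (θ (n + 1)) (hθmem (n + 1)) (θs (n + 1))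
          (hθsmem (n + 1))
        rwa [hzero, sub_zero] at this
      calc (inner ℝ (g (θ n) (θs (n + 1))) (θs (n + 1) - θs n) : ℝ)
          ≤ ‖g (θ n) (θs (n + 1))‖ * ‖θs (n + 1) - θs n‖ := h1
        _ ≤ (β * ‖θ n - θ (n + 1)‖) * ‖θs (n + 1) - θs n‖ :=
            mul_le_mul_of_nonneg_right h2 (norm_nonneg _)
        _ = β * ‖θ n - θ (n + 1)‖ * ‖θs n - θs (n + 1)‖ := by
            rw [norm_sub_rev (θs (n + 1))]
    have key : α * ‖θs n - θs (n + 1)‖ ^ 2 ≤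
        β * ‖θ n - θ (n + 1)‖ * ‖θs n - θs (n + 1)‖ := le_trans hm hcs
    by_cases h0 : ‖θs n - θs (n + 1)‖ = 0
    · rw [h0]; positivity
    · have hpos : 0 < ‖θs n - θs (n + 1)‖ :=
        lt_of_le_of_ne (norm_nonneg _) (Ne.symm h0)
      have h4 : α * ‖θs n - θs (n + 1)‖ ≤ β * ‖θ n - θ (n + 1)‖ := by
        nlinarith [key, hpos]
      have h5 : ‖θs n - θs (n + 1)‖ ≤ (β / α) * ‖θ n - θ (n + 1)‖ := by
        rw [div_mul_eq_mul_div, le_div_iff₀ hα]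
        nlinarith [h4]
      have h6 : ‖θ n - θ (n + 1)‖ ≤ η * γ * ‖θ n - θs n‖ := by
        rw [norm_sub_rev]; exact hstep n
      calc ‖θs n - θs (n + 1)‖ ≤ (β / α) * ‖θ n - θ (n + 1)‖ := h5
        _ ≤ (β / α) * (η * γ * ‖θ n - θs n‖) :=
            mul_le_mul_of_nonneg_left h6 (by positivity)
        _ = η * (β * γ / α) * ‖θ n - θs n‖ := by ring
  calc ∑ n ∈ Finset.range (N - 1), ‖θs n - θs (n + 1)‖
      ≤ ∑ n ∈ Finset.range (N - 1), η * (β * γ / α) * ‖θ n - θs n‖ :=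
        Finset.sum_le_sum fun n _ => hterm n
    _ ≤ ∑ n ∈ Finset.range N, η * (β * γ / α) * ‖θ n - θs n‖ :=
        Finset.sum_le_sum_of_subset_of_nonneg
          (Finset.range_subset_range.mpr (Nat.sub_le N 1))
          (fun n _ _ => by positivity)
    _ = η * (β * γ / α) * ∑ n ∈ Finset.range N, ‖θ n - θs n‖ := by
        rw [Finset.mul_sum]
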